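/- Suppose f: D' → D is a Lipschitz measure-preserving map between compact measure spaces with probability measures μ_{D'}, μ_D, and h ∈ S(D) is a measure-preserving map of D. Then there exists a measure-preserving plan γ' ∈ Γ(D') such that (f × f)_# γ' = (i × h)_# μ_D. -/

import Mathlib

open MeasureTheory Set ProbabilityTheory
open scoped ENNReal NNReal

/-- **Existence of a lifted plan** (from the proof of Theorem `bendi`): if
`f : D' → D` is a Lipschitz measure-preserving map between compact measure spaces
and `h ∈ S(D)` is measure preserving, then there exists a measure-preserving plan
`γ' ∈ Γ(D')` such that `(f × f)_# γ' = (i × h)_# μ_D`. -/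
theorem exists_lifted_plan {m n : ℕ}
    (D' : Set (EuclideanSpace ℝ (Fin m))) (D : Set (EuclideanSpace ℝ (Fin n)))
    (hD' : IsCompact D') (hD : IsCompact D)
    (μ' : Measure (EuclideanSpace ℝ (Fin m))) [IsProbabilityMeasure μ']
    (μ : Measure (EuclideanSpace ℝ (Fin n))) [IsProbabilityMeasure μ]
    (hμ' : ∀ᵐ x ∂μ', x ∈ D') (hμ : ∀ᵐ x ∂μ, x ∈ D)
    (f : EuclideanSpace ℝ (Fin m) → EuclideanSpace ℝ (Fin n)) (K : ℝ≥0)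
    (hfL : LipschitzWith K f) (hfD : MapsTo f D' D) (hfp : μ'.map f = μ)
    (h : EuclideanSpace ℝ (Fin n) → EuclideanSpace ℝ (Fin n))
    (hh : Measurable h) (hhp : μ.map h = μ) :
    ∃ γ' : Measure (EuclideanSpace ℝ (Fin m) × EuclideanSpace ℝ (Fin m)),
      IsProbabilityMeasure γ' ∧ γ'.map Prod.fst = μ' ∧ γ'.map Prod.snd = μ' ∧
      γ'.map (Prod.map f f) = μ.map (fun y => (y, h y)) := by
  have hf : Measurable f := hfL.continuous.measurable
  have hg : Measurable (fun x : EuclideanSpace ℝ (Fin m) => (f x, x)) :=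
    hf.prodMk measurable_id
  -- the graph measure
  set ν : Measure (EuclideanSpace ℝ (Fin n) × EuclideanSpace ℝ (Fin m)) :=
    μ'.map (fun x => (f x, x)) with hν
  have : IsProbabilityMeasure ν := Measure.isProbabilityMeasure_map hg.aemeasurable
  have hνfst : ν.fst = μ := by
    rw [Measure.fst, hν, Measure.map_map measurable_fst hg]
    exact hfp
  set κ := ν.condKernel with hκ
  have hdis : μ ⊗ₘ κ = ν := by
    rw [← hνfst, hκ]; exact ν.disintegrate ν.condKernel
  -- concentration of the conditional kernel on fibers
  have hsm : MeasurableSet {p : EuclideanSpace ℝ (Fin n) × EuclideanSpace ℝ (Fin m) |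
      f p.2 = p.1} :=
    measurableSet_eq_fun (hf.comp measurable_snd) measurable_fst
  have hν0 : ν {p : EuclideanSpace ℝ (Fin n) × EuclideanSpace ℝ (Fin m) | f p.2 = p.1}ᶜ = 0 := by
    rw [hν, Measure.map_apply hg hsm.compl]
    have : (fun x : EuclideanSpace ℝ (Fin m) => (f x, x)) ⁻¹'
        {p : EuclideanSpace ℝ (Fin n) × EuclideanSpace ℝ (Fin m) | f p.2 = p.1}ᶜ = ∅ := by
      ext x; simp
    rw [this]; exact measure_empty
  have hmeasκ : Measurable fun y => κ y {x | ¬ f x = y} := by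
    have := Kernel.measurable_kernel_prodMk_left (κ := κ) hsm.compl
    exact this
  have hconc : ∀ᵐ y ∂μ, κ y {x | ¬ f x = y} = 0 := by
    have h0 := hν0
    rw [← hdis, Measure.compProd_apply hsm.compl] at h0
    have h1 := (lintegral_eq_zero_iff
      (Kernel.measurable_kernel_prodMk_left (κ := κ) hsm.compl)).mp h0
    filter_upwards [h1] with y hy
    simp at hy; exact hy
  -- transfer along h
  have hAm : MeasurableSet {y | κ y {x | ¬ f x = y} ≠ 0} :=
    (hmeasκ (measurableSet_singleton 0)).compl
  have hA0 : μ {y | κ y {x | ¬ f x = y} ≠ 0} = 0 := by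
    rw [← compl_setOf]; exact hconc
  have hconch : ∀ᵐ y ∂μ, κ (h y) {x | ¬ f x = h y} = 0 := by
    have h2 : μ (h ⁻¹' {y | κ y {x | ¬ f x = y} ≠ 0}) = 0 := by
      rw [← Measure.map_apply hh hAm, hhp]; exact hA0
    rw [ae_iff]; exact h2
  -- the kernel for the plan
  set ξ : Kernel (EuclideanSpace ℝ (Fin n))
      (EuclideanSpace ℝ (Fin m) × EuclideanSpace ℝ (Fin m)) :=
    κ ×ₖ (κ.comap h hh) with hξ
  have hξa : ∀ y, ξ y = (κ y).prod (κ (h y)) := by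
    intro y; rw [hξ, Kernel.prod_apply, Kernel.comap_apply]
  refine ⟨μ.bind ξ, ?_, ?_, ?_, ?_⟩
  · constructor
    rw [Measure.bind_apply MeasurableSet.univ ξ.measurable.aemeasurable]
    simp [measure_univ]
  · -- first marginal
    ext s hs
    rw [Measure.map_apply measurable_fst hs,
      Measure.bind_apply (hs.preimage measurable_fst) ξ.measurable.aemeasurable]
    have h1 : ∀ y, ξ y (Prod.fst ⁻¹' s) = κ y s := by
      intro y
      rw [hξa y]
      have hps : Prod.fst ⁻¹' s = s ×ˢ (univ : Set (EuclideanSpace ℝ (Fin m))) := by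
        ext p; simp
      rw [hps, Measure.prod_prod, measure_univ, mul_one]
    simp_rw [h1]
    have h2 : ∫⁻ y, κ y s ∂μ = (μ ⊗ₘ κ) (univ ×ˢ s) := by
      rw [Measure.compProd_apply (MeasurableSet.univ.prod hs)]
      congr 1; ext y; congr 1; ext x; simp
    rw [h2, hdis, hν, Measure.map_apply hg (MeasurableSet.univ.prod hs)]
    congr 1; ext x; simp
  · -- second marginal
    ext s hs
    rw [Measure.map_apply measurable_snd hs,
      Measure.bind_apply (hs.preimage measurable_snd) ξ.measurable.aemeasurable]
    have h1 : ∀ y, ξ y (Prod.snd ⁻¹' s) = κ (h y) s := by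
      intro y
      rw [hξa y]
      have hps : Prod.snd ⁻¹' s = (univ : Set (EuclideanSpace ℝ (Fin m))) ×ˢ s := by
        ext p; simp
      rw [hps, Measure.prod_prod, measure_univ, one_mul]
    simp_rw [h1]
    have h2 : ∫⁻ y, κ (h y) s ∂μ = ∫⁻ z, κ z s ∂(μ.map h) :=
      (lintegral_map (κ.measurable_coe hs) hh).symm
    rw [h2, hhp]
    have h3 : ∫⁻ y, κ y s ∂μ = (μ ⊗ₘ κ) (univ ×ˢ s) := by
      rw [Measure.compProd_apply (MeasurableSet.univ.prod hs)]
      congr 1; ext y; congr 1; ext x; simp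
    rw [h3, hdis, hν, Measure.map_apply hg (MeasurableSet.univ.prod hs)]
    congr 1; ext x; simp
  · -- pushforward by f × f
    have hff : Measurable (Prod.map f f) := hf.prodMap hf
    have hyh : Measurable (fun y => (y, h y)) := measurable_id.prodMk hh
    ext s hs
    rw [Measure.map_apply hff hs,
      Measure.bind_apply (hs.preimage hff) ξ.measurable.aemeasurable]
    have key : ∀ᵐ y ∂μ, ξ y (Prod.map f f ⁻¹' s) = Measure.dirac (y, h y) s := by
      filter_upwards [hconc, hconch] with y hy1 hy2
      have hκy : (κ y).map f = Measure.dirac y := by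
        have hae : f =ᵐ[κ y] (fun _ => y) := by
          rw [Filter.EventuallyEq, ae_iff]; exact hy1
        rw [Measure.map_congr hae, Measure.map_const, measure_univ, one_smul]
      have hκhy : (κ (h y)).map f = Measure.dirac (h y) := by
        have hae : f =ᵐ[κ (h y)] (fun _ => h y) := by
          rw [Filter.EventuallyEq, ae_iff]; exact hy2
        rw [Measure.map_congr hae, Measure.map_const, measure_univ, one_smul]
      have hmap : (ξ y).map (Prod.map f f) = Measure.dirac (y, h y) := by
        rw [hξa y, ← Measure.map_prod_map _ _ hf hf, hκy, hκhy,
          Measure.dirac_prod_dirac]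
      rw [← hmap, Measure.map_apply hff hs]
    rw [lintegral_congr_ae key]
    have hmd : Measurable (fun y : EuclideanSpace ℝ (Fin n) =>
        Measure.dirac (y, h y)) := Measure.measurable_dirac.comp hyh
    rw [← Measure.bind_apply hs hmd.aemeasurable, Measure.bind_dirac_eq_map μ hyh]
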